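/- Let b = (b_k)_{k ∈ ℕ, k ≥ 1} be a non-increasing sequence of positive real numbers. For 0 < p < q ≤ ∞ set α = 1/p − 1/q and σ_{n,q}(b) = (∑_{k=n}^∞ b_k^q)^{1/q} (with the sup interpretation for q = ∞). Then 2^{-1/p} ‖b‖_{ℓ^p} ≤ (∑_{n=1}^∞ (n^α σ_{n,q}(b))^p / n)^{1/p}, i.e., the weighted sum of tail q-norms dominates the ℓ^p norm of b up to the factor 2^{-1/p}. -/

import Mathlib

open ENNReal

private lemma bmono_aux (b : ℕ → ℝ) (hmono : ∀ k, 1 ≤ k → b (k + 1) ≤ b k) :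
    ∀ m, 1 ≤ m → ∀ j, b (m + j) ≤ b m := by
  intro m hm j
  induction j with
  | zero => simp
  | succ j ih =>
      calc b (m + (j + 1)) = b ((m + j) + 1) := by ring_nf
        _ ≤ b (m + j) := hmono _ (le_trans hm (Nat.le_add_right _ _))
        _ ≤ b m := ih

/-- Let `b = (b_k)_{k ≥ 1}` be a non-increasing sequence of positive reals,
`0 < p < q ≤ ∞`, `α = 1/p − 1/q` and `σ_{n,q}(b) = (∑_{k=n}^∞ b_k^q)^{1/q}` (with the sup
interpretation for `q = ∞`). Then
`2^{-1/p} ‖b‖_{ℓ^p} ≤ (∑_{n=1}^∞ (n^α σ_{n,q}(b))^p / n)^{1/p}`.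
The computation is carried out in `ℝ≥0∞` so that both sides are always defined. -/
theorem lower_jackson_estimate
    (b : ℕ → ℝ) (hpos : ∀ k, 1 ≤ k → 0 < b k)
    (hmono : ∀ k, 1 ≤ k → b (k + 1) ≤ b k)
    (p : ℝ) (hp : 0 < p) (q : ℝ≥0∞) (hpq : ENNReal.ofReal p < q) :
    (2 : ℝ≥0∞) ^ (-(1 / p)) * (∑' k : ℕ, ENNReal.ofReal (b (k + 1)) ^ p) ^ (1 / p) ≤
      (∑' n : ℕ,
          (((n : ℝ≥0∞) + 1) ^ (1 / p - 1 / q.toReal) *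
              (if q = ∞ then ⨆ j : ℕ, ENNReal.ofReal (b (n + 1 + j))
                else (∑' j : ℕ, ENNReal.ofReal (b (n + 1 + j)) ^ q.toReal) ^ (1 / q.toReal))) ^ p /
            ((n : ℝ≥0∞) + 1)) ^ (1 / p) := by
  have hBmono : ∀ m, 1 ≤ m → ∀ j,
      ENNReal.ofReal (b (m + j)) ≤ ENNReal.ofReal (b m) := fun m hm j =>
    ENNReal.ofReal_le_ofReal (bmono_aux b hmono m hm j)
  have hn1 : ∀ n : ℕ, ((n : ℝ≥0∞) + 1) ≠ 0 := fun n => by simp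
  have hn2 : ∀ n : ℕ, ((n : ℝ≥0∞) + 1) ≠ ∞ := fun n => by
    simp [ENNReal.add_ne_top]
  -- key pointwise estimate
  have key : ∀ n : ℕ, ENNReal.ofReal (b (2 * n + 1)) ^ p ≤
      (((n : ℝ≥0∞) + 1) ^ (1 / p - 1 / q.toReal) *
          (if q = ∞ then ⨆ j : ℕ, ENNReal.ofReal (b (n + 1 + j))
            else (∑' j : ℕ, ENNReal.ofReal (b (n + 1 + j)) ^ q.toReal) ^ (1 / q.toReal))) ^ p /
        ((n : ℝ≥0∞) + 1) := by
    intro n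
    have hsig : ((n : ℝ≥0∞) + 1) ^ (1 / q.toReal) * ENNReal.ofReal (b (2 * n + 1)) ≤
        (if q = ∞ then ⨆ j : ℕ, ENNReal.ofReal (b (n + 1 + j))
          else (∑' j : ℕ, ENNReal.ofReal (b (n + 1 + j)) ^ q.toReal) ^ (1 / q.toReal)) := by
      by_cases hq : q = ∞
      · rw [hq, if_pos rfl, show (1 : ℝ) / (⊤ : ℝ≥0∞).toReal = 0 from by norm_num,
          ENNReal.rpow_zero, one_mul]
        have : ENNReal.ofReal (b (2 * n + 1)) ≤ ENNReal.ofReal (b (n + 1 + n)) := by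
          rw [show n + 1 + n = 2 * n + 1 by ring]
        exact this.trans (le_iSup (fun j => ENNReal.ofReal (b (n + 1 + j))) n)
      · simp only [hq, if_false]
        have hr : 0 < q.toReal := ENNReal.toReal_pos
          (fun h => by simp [h] at hpq) hq
        set r := q.toReal with hrdef
        have hsum : ((n : ℝ≥0∞) + 1) * ENNReal.ofReal (b (2 * n + 1)) ^ r ≤
            ∑' j : ℕ, ENNReal.ofReal (b (n + 1 + j)) ^ r := by
          calc ((n : ℝ≥0∞) + 1) * ENNReal.ofReal (b (2 * n + 1)) ^ r
              = ∑ j ∈ Finset.range (n + 1), ENNReal.ofReal (b (2 * n + 1)) ^ r := by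
                simp [Finset.sum_const, mul_comm]
            _ ≤ ∑ j ∈ Finset.range (n + 1), ENNReal.ofReal (b (n + 1 + j)) ^ r := by
                refine Finset.sum_le_sum fun j hj => ?_
                refine ENNReal.rpow_le_rpow ?_ hr.le
                have hj' : j ≤ n := Nat.lt_succ_iff.mp (Finset.mem_range.mp hj)
                have : ENNReal.ofReal (b ((n + 1 + j) + (n - j))) ≤
                    ENNReal.ofReal (b (n + 1 + j)) := hBmono _ (by omega) _
                rwa [show (n + 1 + j) + (n - j) = 2 * n + 1 by omega] at this
            _ ≤ ∑' j : ℕ, ENNReal.ofReal (b (n + 1 + j)) ^ r :=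
                ENNReal.sum_le_tsum _
        calc ((n : ℝ≥0∞) + 1) ^ (1 / r) * ENNReal.ofReal (b (2 * n + 1))
            = (((n : ℝ≥0∞) + 1) * ENNReal.ofReal (b (2 * n + 1)) ^ r) ^ (1 / r) := by
              rw [ENNReal.mul_rpow_of_nonneg _ _ (by positivity), ← ENNReal.rpow_mul,
                mul_one_div_cancel hr.ne', ENNReal.rpow_one]
          _ ≤ (∑' j : ℕ, ENNReal.ofReal (b (n + 1 + j)) ^ r) ^ (1 / r) :=
              ENNReal.rpow_le_rpow hsum (by positivity)
    -- now combine
    have hmul : ((n : ℝ≥0∞) + 1) ^ (1 / p) * ENNReal.ofReal (b (2 * n + 1)) ≤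
        ((n : ℝ≥0∞) + 1) ^ (1 / p - 1 / q.toReal) *
          (if q = ∞ then ⨆ j : ℕ, ENNReal.ofReal (b (n + 1 + j))
            else (∑' j : ℕ, ENNReal.ofReal (b (n + 1 + j)) ^ q.toReal) ^ (1 / q.toReal)) := by
      calc ((n : ℝ≥0∞) + 1) ^ (1 / p) * ENNReal.ofReal (b (2 * n + 1))
          = ((n : ℝ≥0∞) + 1) ^ (1 / p - 1 / q.toReal) *
              (((n : ℝ≥0∞) + 1) ^ (1 / q.toReal) * ENNReal.ofReal (b (2 * n + 1))) := by
            rw [← mul_assoc, ← ENNReal.rpow_add _ _ (hn1 n) (hn2 n)]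
            ring_nf
        _ ≤ _ := mul_le_mul_of_nonneg_left hsig (zero_le)
    calc ENNReal.ofReal (b (2 * n + 1)) ^ p
        = (((n : ℝ≥0∞) + 1) ^ (1 / p) * ENNReal.ofReal (b (2 * n + 1))) ^ p /
            ((n : ℝ≥0∞) + 1) := by
          rw [ENNReal.mul_rpow_of_nonneg _ _ hp.le, ← ENNReal.rpow_mul,
            one_div_mul_cancel hp.ne', ENNReal.rpow_one,
            mul_div_assoc, ENNReal.mul_div_cancel' (fun h => absurd h (hn1 n)) (fun h => absurd h (hn2 n))]
      _ ≤ _ := ENNReal.div_le_div_right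
          (ENNReal.rpow_le_rpow hmul hp.le) _
  -- sum over n
  have hS : (∑' n : ℕ, ENNReal.ofReal (b (2 * n + 1)) ^ p) ≤
      ∑' n : ℕ,
        (((n : ℝ≥0∞) + 1) ^ (1 / p - 1 / q.toReal) *
            (if q = ∞ then ⨆ j : ℕ, ENNReal.ofReal (b (n + 1 + j))
              else (∑' j : ℕ, ENNReal.ofReal (b (n + 1 + j)) ^ q.toReal) ^ (1 / q.toReal))) ^ p /
          ((n : ℝ≥0∞) + 1) := ENNReal.tsum_le_tsum key
  -- even/odd split
  have hsplit : (∑' k : ℕ, ENNReal.ofReal (b (k + 1)) ^ p) ≤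
      2 * ∑' n : ℕ, ENNReal.ofReal (b (2 * n + 1)) ^ p := by
    have := tsum_even_add_odd (f := fun k => ENNReal.ofReal (b (k + 1)) ^ p)
      ENNReal.summable ENNReal.summable
    rw [← this]
    have hodd : (∑' n : ℕ, ENNReal.ofReal (b (2 * n + 1 + 1)) ^ p) ≤
        ∑' n : ℕ, ENNReal.ofReal (b (2 * n + 1)) ^ p := by
      refine ENNReal.tsum_le_tsum fun n => ?_
      exact ENNReal.rpow_le_rpow
        (ENNReal.ofReal_le_ofReal (hmono _ (by omega))) hp.le
    calc (∑' n : ℕ, ENNReal.ofReal (b (2 * n + 1)) ^ p) +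
          ∑' n : ℕ, ENNReal.ofReal (b (2 * n + 1 + 1)) ^ p
        ≤ (∑' n : ℕ, ENNReal.ofReal (b (2 * n + 1)) ^ p) +
          ∑' n : ℕ, ENNReal.ofReal (b (2 * n + 1)) ^ p := add_le_add le_rfl hodd
      _ = 2 * ∑' n : ℕ, ENNReal.ofReal (b (2 * n + 1)) ^ p := (two_mul _).symm
  -- finish
  calc (2 : ℝ≥0∞) ^ (-(1 / p)) * (∑' k : ℕ, ENNReal.ofReal (b (k + 1)) ^ p) ^ (1 / p)
      ≤ (2 : ℝ≥0∞) ^ (-(1 / p)) *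
          (2 * ∑' n : ℕ, ENNReal.ofReal (b (2 * n + 1)) ^ p) ^ (1 / p) :=
        mul_le_mul_of_nonneg_left (ENNReal.rpow_le_rpow hsplit (by positivity)) (zero_le)
    _ = (∑' n : ℕ, ENNReal.ofReal (b (2 * n + 1)) ^ p) ^ (1 / p) := by
        rw [ENNReal.mul_rpow_of_nonneg _ _ (by positivity), ← mul_assoc,
          ← ENNReal.rpow_add _ _ (by norm_num) (by norm_num)]
        norm_num
    _ ≤ _ := ENNReal.rpow_le_rpow hS (by positivity)
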